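/- arXiv:2301.00612 — 3 statements merged into one kernel-verified Lean document; each statement's English description precedes it below -/
import Mathlib

section
/- Let q > 1 be a real number and let α₁, α₂, β₁, β₂ be nonzero complex numbers with α₁ ≠ α₂ and β₁ ≠ β₂, each of absolute value at most 1, and let s be a complex number with Re(s) > 0. Then the series ∑_{n=0}^∞ ((α₁^{n+1} - α₂^{n+1})/(α₁ - α₂)) · ((β₁^{n+1} - β₂^{n+1})/(β₁ - β₂)) · q^{-ns} converges and equals (1 - α₁α₂β₁β₂ q^{-2s}) / ((1 - α₁β₁q^{-s})(1 - α₁β₂q^{-s})(1 - α₂β₁q^{-s})(1 - α₂β₂q^{-s})). -/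
open Complex

lemma rs_aux (a b c d t : ℂ) (h1 : 1 - a*b*t ≠ 0) (h2 : 1 - a*d*t ≠ 0)
    (h3 : 1 - c*b*t ≠ 0) (h4 : 1 - c*d*t ≠ 0) (h5 : a - c ≠ 0) (h6 : b - d ≠ 0) :
    (a*b/(1-a*b*t) - a*d/(1-a*d*t) - c*b/(1-c*b*t) + c*d/(1-c*d*t))/((a-c)*(b-d)) =
    (1 - a*c*b*d*(t*t))/((1-a*b*t)*(1-a*d*t)*(1-c*b*t)*(1-c*d*t)) := by
  rw [div_eq_div_iff (mul_ne_zero h5 h6)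
    (mul_ne_zero (mul_ne_zero (mul_ne_zero h1 h2) h3) h4)]
  rw [div_sub_div _ _ h1 h2, div_sub_div _ _ (mul_ne_zero h1 h2) h3,
    div_add_div _ _ (mul_ne_zero (mul_ne_zero h1 h2) h3) h4, div_mul_eq_mul_div,
    mul_div_cancel_right₀ _ (mul_ne_zero (mul_ne_zero (mul_ne_zero h1 h2) h3) h4)]
  ring

/-- Unramified Rankin–Selberg zeta computation: the series
`∑ ((α₁^{n+1}-α₂^{n+1})/(α₁-α₂))((β₁^{n+1}-β₂^{n+1})/(β₁-β₂)) q^{-ns}` converges to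
`(1 - α₁α₂β₁β₂ q^{-2s}) / ∏ (1 - αᵢβⱼ q^{-s})`. -/
theorem stmt_0 (q : ℝ) (hq : 1 < q) (α₁ α₂ β₁ β₂ : ℂ)
    (hα₁ : α₁ ≠ 0) (hα₂ : α₂ ≠ 0) (hβ₁ : β₁ ≠ 0) (hβ₂ : β₂ ≠ 0)
    (hα : α₁ ≠ α₂) (hβ : β₁ ≠ β₂)
    (hα₁abs : ‖α₁‖ ≤ 1) (hα₂abs : ‖α₂‖ ≤ 1)
    (hβ₁abs : ‖β₁‖ ≤ 1) (hβ₂abs : ‖β₂‖ ≤ 1)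
    (s : ℂ) (hs : 0 < s.re) :
    HasSum
      (fun n : ℕ =>
        ((α₁ ^ (n + 1) - α₂ ^ (n + 1)) / (α₁ - α₂)) *
          ((β₁ ^ (n + 1) - β₂ ^ (n + 1)) / (β₁ - β₂)) *
          (q : ℂ) ^ (-(n : ℂ) * s))
      ((1 - α₁ * α₂ * β₁ * β₂ * (q : ℂ) ^ (-2 * s)) /
        ((1 - α₁ * β₁ * (q : ℂ) ^ (-s)) * (1 - α₁ * β₂ * (q : ℂ) ^ (-s)) *
          (1 - α₂ * β₁ * (q : ℂ) ^ (-s)) * (1 - α₂ * β₂ * (q : ℂ) ^ (-s)))) := by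
  have hq0 : (0 : ℝ) < q := lt_trans one_pos hq
  set t : ℂ := (q : ℂ) ^ (-s) with ht_def
  have ht : ‖t‖ < 1 := by
    rw [ht_def, Complex.norm_cpow_eq_rpow_re_of_pos hq0]
    have : (-s).re < 0 := by simp [hs]
    exact Real.rpow_lt_one_of_one_lt_of_neg hq this
  have key : ∀ γ : ℂ, ‖γ‖ ≤ 1 →
      HasSum (fun n : ℕ => γ ^ (n + 1) * t ^ n) (γ / (1 - γ * t)) := by
    intro γ hγ
    have h1 : ‖γ * t‖ < 1 := by
      calc ‖γ * t‖ = ‖γ‖ * ‖t‖ := by simp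
        _ ≤ 1 * ‖t‖ := by
            exact mul_le_mul_of_nonneg_right hγ (norm_nonneg t)
        _ < 1 := by simpa using ht
    have h := (hasSum_geometric_of_norm_lt_one h1).mul_left γ
    have heq : (fun n : ℕ => γ * (γ * t) ^ n) = fun n : ℕ => γ ^ (n + 1) * t ^ n := by
      funext n; rw [mul_pow]; ring
    rw [heq] at h
    rw [div_eq_mul_inv]
    exact h
  have habs : ∀ a b : ℂ, ‖a‖ ≤ 1 → ‖b‖ ≤ 1 → ‖a * b‖ ≤ 1 := by
    intro a b ha hb
    rw [norm_mul]
    calc ‖a‖ * ‖b‖ ≤ 1 * 1 :=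
      mul_le_mul ha hb (norm_nonneg b) zero_le_one
      _ = 1 := one_mul 1
  have h11 := key (α₁ * β₁) (habs _ _ hα₁abs hβ₁abs)
  have h12 := key (α₁ * β₂) (habs _ _ hα₁abs hβ₂abs)
  have h21 := key (α₂ * β₁) (habs _ _ hα₂abs hβ₁abs)
  have h22 := key (α₂ * β₂) (habs _ _ hα₂abs hβ₂abs)
  have H := (((h11.sub h12).sub h21).add h22).div_const ((α₁ - α₂) * (β₁ - β₂))
  -- denominators nonzero
  have hne : ∀ γ : ℂ, ‖γ‖ ≤ 1 → 1 - γ * t ≠ 0 := by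
    intro γ hγ h0
    have h1 : ‖γ * t‖ < 1 := by
      calc ‖γ * t‖ = ‖γ‖ * ‖t‖ := by simp
        _ ≤ 1 * ‖t‖ := mul_le_mul_of_nonneg_right hγ (norm_nonneg t)
        _ < 1 := by simpa using ht
    have : γ * t = 1 := by
      have := sub_eq_zero.mp h0; exact this.symm
    rw [this] at h1; simp at h1
  have hne11 := hne (α₁ * β₁) (habs _ _ hα₁abs hβ₁abs)
  have hne12 := hne (α₁ * β₂) (habs _ _ hα₁abs hβ₂abs)
  have hne21 := hne (α₂ * β₁) (habs _ _ hα₂abs hβ₁abs)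
  have hne22 := hne (α₂ * β₂) (habs _ _ hα₂abs hβ₂abs)
  have hαne : α₁ - α₂ ≠ 0 := sub_ne_zero.mpr hα
  have hβne : β₁ - β₂ ≠ 0 := sub_ne_zero.mpr hβ
  have hq2 : (q : ℂ) ^ (-2 * s) = t * t := by
    rw [ht_def, ← Complex.cpow_add _ _ (by exact_mod_cast hq0.ne')]
    ring_nf
  have hfun : (fun n : ℕ =>
      ((α₁ * β₁) ^ (n + 1) * t ^ n - (α₁ * β₂) ^ (n + 1) * t ^ n -
        (α₂ * β₁) ^ (n + 1) * t ^ n + (α₂ * β₂) ^ (n + 1) * t ^ n) /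
        ((α₁ - α₂) * (β₁ - β₂))) =
      (fun n : ℕ =>
        ((α₁ ^ (n + 1) - α₂ ^ (n + 1)) / (α₁ - α₂)) *
          ((β₁ ^ (n + 1) - β₂ ^ (n + 1)) / (β₁ - β₂)) *
          (q : ℂ) ^ (-(n : ℂ) * s)) := by
    funext n
    have htn : (q : ℂ) ^ (-(n : ℂ) * s) = t ^ n := by
      rw [ht_def, ← Complex.cpow_nat_mul]
      ring_nf
    rw [htn]
    field_simp
    ring
  rw [hfun] at H
  have hval : (α₁ * β₁ / (1 - α₁ * β₁ * t) - α₁ * β₂ / (1 - α₁ * β₂ * t) -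
        α₂ * β₁ / (1 - α₂ * β₁ * t) + α₂ * β₂ / (1 - α₂ * β₂ * t)) /
      ((α₁ - α₂) * (β₁ - β₂)) =
      (1 - α₁ * α₂ * β₁ * β₂ * (t * t)) /
        ((1 - α₁ * β₁ * t) * (1 - α₁ * β₂ * t) * (1 - α₂ * β₁ * t) * (1 - α₂ * β₂ * t)) := by
    have := rs_aux α₁ β₁ α₂ β₂ t hne11 hne12 hne21 hne22 hαne hβne
    convert this using 2 <;> ring
  rw [hval] at H
  rw [hq2]
  exact H
end

section
/- Let q > 1 be real, μ a complex number with |μ| = 1, and s a complex number with Re(s) > 0. Then the double series ∑_{m≥0} ∑_{n≥0} q^{-s(m+n)} · (∑_{ℓ=-m}^{n} μ^ℓ) converges and equals (1 + q^{-s}) / ((1 - q^{-s})(1 - μ q^{-s})(1 - μ^{-1} q^{-s})), where for μ = 1 the inner sum ∑_{ℓ=-m}^{n} μ^ℓ is interpreted as m + n + 1. -/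
open Finset

/-- Auxiliary: `∑_{j < m+n+1} μ^j = (A_m + B_n - 1) μ^m`. -/
private lemma aux_nat_id (μ : ℂ) (hμ : μ ≠ 0) (m n : ℕ) :
    ∑ j ∈ range (m + n + 1), μ ^ j =
      ((∑ a ∈ range (m + 1), (μ⁻¹) ^ a) + (∑ b ∈ range (n + 1), μ ^ b) - 1) * μ ^ m := by
  have h2 : (∑ a ∈ range (m + 1), (μ⁻¹) ^ a) * μ ^ m = ∑ a ∈ range (m + 1), μ ^ a := by
    rw [Finset.sum_mul, ← Finset.sum_range_reflect]
    refine Finset.sum_congr rfl fun a ha => ?_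
    have ha' : a ≤ m := by simpa [Nat.lt_succ_iff] using Finset.mem_range.mp ha
    have hm : μ ^ m = μ ^ (m - a) * μ ^ a := by
      rw [← pow_add, Nat.sub_add_cancel ha']
    have hred : m + 1 - 1 - a = m - a := by omega
    rw [hred, hm, inv_pow, inv_mul_cancel_left₀ (pow_ne_zero _ hμ)]
  have h1 : ∑ j ∈ range (m + (n + 1)), μ ^ j =
      (∑ j ∈ range m, μ ^ j) + ∑ k ∈ range (n + 1), μ ^ (m + k) :=
    Finset.sum_range_add _ m (n + 1)
  have hmn : m + n + 1 = m + (n + 1) := by omega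
  rw [hmn, h1, sub_mul, add_mul, h2, one_mul,
    show (∑ a ∈ range (m + 1), μ ^ a) = (∑ a ∈ range m, μ ^ a) + μ ^ m from
      Finset.sum_range_succ _ m]
  simp only [pow_add, ← Finset.mul_sum]
  ring

/-- Auxiliary: the inner geometric sum over `Icc (-m) n`. -/
private lemma aux_inner (μ : ℂ) (hμ : μ ≠ 0) (m n : ℕ) :
    ∑ ℓ ∈ Finset.Icc (-(m : ℤ)) (n : ℤ), μ ^ ℓ =
      (∑ a ∈ range (m + 1), (μ⁻¹) ^ a) + (∑ b ∈ range (n + 1), μ ^ b) - 1 := by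
  have hre : ∑ ℓ ∈ Finset.Icc (-(m : ℤ)) (n : ℤ), μ ^ ℓ =
      ∑ j ∈ range (m + n + 1), μ ^ ((j : ℤ) - (m : ℤ)) := by
    refine Finset.sum_nbij' (fun ℓ => (ℓ + m).toNat) (fun j => (j : ℤ) - (m : ℤ))
      ?_ ?_ ?_ ?_ ?_
    · intro a ha
      simp only [Finset.mem_Icc] at ha
      simp only [Finset.mem_range]
      omega
    · intro a ha
      simp only [Finset.mem_range] at ha
      simp only [Finset.mem_Icc]
      omega
    · intro a ha
      simp only [Finset.mem_Icc] at ha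
      omega
    · intro a ha
      simp only [Finset.mem_range] at ha
      omega
    · intro a ha
      simp only [Finset.mem_Icc] at ha
      congr 1
      omega
  have hstep : ∀ j : ℕ, μ ^ ((j : ℤ) - (m : ℤ)) = μ ^ j * (μ ^ m)⁻¹ := by
    intro j
    rw [zpow_sub₀ hμ, div_eq_mul_inv, zpow_natCast, zpow_natCast]
  rw [hre]
  simp only [hstep]
  rw [← Finset.sum_mul, aux_nat_id μ hμ m n,
    mul_inv_cancel_right₀ (pow_ne_zero _ hμ)]

set_option maxHeartbeats 1000000 in
/-- The split unramified optimal-form zeta integral: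
`∑_{m,n≥0} q^{-s(m+n)} (∑_{ℓ=-m}^{n} μ^ℓ) = (1+q^{-s})/((1-q^{-s})(1-μq^{-s})(1-μ⁻¹q^{-s}))`. -/
theorem stmt_2 (q : ℝ) (hq : 1 < q) (μ : ℂ) (hμ : ‖μ‖ = 1)
    (s : ℂ) (hs : 0 < s.re) :
    HasSum
      (fun p : ℕ × ℕ =>
        (q : ℂ) ^ (-s * ((p.1 : ℂ) + (p.2 : ℂ))) *
          ∑ ℓ ∈ Finset.Icc (-(p.1 : ℤ)) (p.2 : ℤ), μ ^ ℓ)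
      ((1 + (q : ℂ) ^ (-s)) /
        ((1 - (q : ℂ) ^ (-s)) * (1 - μ * (q : ℂ) ^ (-s)) *
          (1 - μ⁻¹ * (q : ℂ) ^ (-s)))) := by
  have hq0 : (0 : ℝ) < q := lt_trans one_pos hq
  obtain ⟨t, htdef⟩ : ∃ t : ℂ, (q : ℂ) ^ (-s) = t := ⟨_, rfl⟩
  rw [htdef]
  have hμ0 : μ ≠ 0 := by
    intro h
    rw [h] at hμ
    simp at hμ
  have hμnorm : ‖μ‖ = 1 := hμ
  -- norm bounds
  have ht : ‖t‖ < 1 := by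
    have h1 : ‖t‖ = q ^ (-s).re := by
      rw [← htdef]; exact Complex.norm_cpow_eq_rpow_re_of_pos hq0 _
    have h2 : (-s).re < 0 := by simpa [Complex.neg_re] using neg_neg_of_pos hs
    calc ‖t‖ = q ^ (-s).re := h1
    _ < 1 := Real.rpow_lt_one_of_one_lt_of_neg hq h2
  have hu : ‖μ⁻¹ * t‖ < 1 := by
    rw [norm_mul, norm_inv, hμnorm]
    simpa using ht
  have hv : ‖μ * t‖ < 1 := by
    rw [norm_mul, hμnorm, one_mul]; exact ht
  -- geometric series
  have hg : HasSum (fun n : ℕ => t ^ n) (1 - t)⁻¹ := hasSum_geometric_of_norm_lt_one ht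
  have hgu : HasSum (fun n : ℕ => (μ⁻¹ * t) ^ n) (1 - μ⁻¹ * t)⁻¹ :=
    hasSum_geometric_of_norm_lt_one hu
  have hgv : HasSum (fun n : ℕ => (μ * t) ^ n) (1 - μ * t)⁻¹ :=
    hasSum_geometric_of_norm_lt_one hv
  -- norm summability of geometric series
  have hnt : Summable fun n : ℕ => ‖t ^ n‖ := by
    simpa [norm_pow] using summable_geometric_of_lt_one (norm_nonneg t) ht
  have hnu : Summable fun n : ℕ => ‖(μ⁻¹ * t) ^ n‖ := by
    simpa [norm_pow] using summable_geometric_of_lt_one (norm_nonneg (μ⁻¹ * t)) hu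
  have hnv : Summable fun n : ℕ => ‖(μ * t) ^ n‖ := by
    simpa [norm_pow] using summable_geometric_of_lt_one (norm_nonneg (μ * t)) hv
  -- Cauchy products
  set F : ℕ → ℂ := fun m => t ^ m * ∑ a ∈ range (m + 1), (μ⁻¹) ^ a with hFdef
  set G : ℕ → ℂ := fun n => t ^ n * ∑ b ∈ range (n + 1), μ ^ b with hGdef
  have hFeq : ∀ m : ℕ, (∑ k ∈ range (m + 1), (μ⁻¹ * t) ^ k * t ^ (m - k)) = F m := by
    intro m
    show _ = t ^ m * ∑ a ∈ range (m + 1), (μ⁻¹) ^ a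
    rw [Finset.mul_sum]
    refine Finset.sum_congr rfl fun k hk => ?_
    have hk' : k ≤ m := by simpa [Nat.lt_succ_iff] using Finset.mem_range.mp hk
    rw [mul_pow]
    have : t ^ k * t ^ (m - k) = t ^ m := by
      rw [← pow_add, Nat.add_sub_cancel' hk']
    calc (μ⁻¹) ^ k * t ^ k * t ^ (m - k) = (μ⁻¹) ^ k * (t ^ k * t ^ (m - k)) := by ring
    _ = t ^ m * (μ⁻¹) ^ k := by rw [this]; ring
  have hGeq : ∀ n : ℕ, (∑ k ∈ range (n + 1), (μ * t) ^ k * t ^ (n - k)) = G n := by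
    intro n
    show _ = t ^ n * ∑ b ∈ range (n + 1), μ ^ b
    rw [Finset.mul_sum]
    refine Finset.sum_congr rfl fun k hk => ?_
    have hk' : k ≤ n := by simpa [Nat.lt_succ_iff] using Finset.mem_range.mp hk
    rw [mul_pow]
    have : t ^ k * t ^ (n - k) = t ^ n := by
      rw [← pow_add, Nat.add_sub_cancel' hk']
    calc μ ^ k * t ^ k * t ^ (n - k) = μ ^ k * (t ^ k * t ^ (n - k)) := by ring
    _ = t ^ n * μ ^ k := by rw [this]; ring
  have hF : HasSum F ((1 - μ⁻¹ * t)⁻¹ * (1 - t)⁻¹) := by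
    have h := hasSum_sum_range_mul_of_summable_norm hnu hnt
    rw [hgu.tsum_eq, hg.tsum_eq] at h
    simpa only [hFeq] using h
  have hG : HasSum G ((1 - μ * t)⁻¹ * (1 - t)⁻¹) := by
    have h := hasSum_sum_range_mul_of_summable_norm hnv hnt
    rw [hgv.tsum_eq, hg.tsum_eq] at h
    simpa only [hGeq] using h
  have hFn : Summable fun m : ℕ => ‖F m‖ := by
    have h := summable_norm_sum_mul_range_of_summable_norm hnu hnt
    simpa only [hFeq] using h
  have hGn : Summable fun n : ℕ => ‖G n‖ := by
    have h := summable_norm_sum_mul_range_of_summable_norm hnv hnt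
    simpa only [hGeq] using h
  -- product sums over ℕ × ℕ
  have hP1 : HasSum (fun p : ℕ × ℕ => F p.1 * t ^ p.2)
      ((1 - μ⁻¹ * t)⁻¹ * (1 - t)⁻¹ * (1 - t)⁻¹) :=
    hF.mul hg (summable_mul_of_summable_norm hFn hnt)
  have hP2 : HasSum (fun p : ℕ × ℕ => t ^ p.1 * G p.2)
      ((1 - t)⁻¹ * ((1 - μ * t)⁻¹ * (1 - t)⁻¹)) :=
    hg.mul hG (summable_mul_of_summable_norm hnt hGn)
  have hP3 : HasSum (fun p : ℕ × ℕ => t ^ p.1 * t ^ p.2)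
      ((1 - t)⁻¹ * (1 - t)⁻¹) :=
    hg.mul hg (summable_mul_of_summable_norm hnt hnt)
  have htotal := (hP1.add hP2).sub hP3
  -- pointwise identification of the summand
  have hfun : ∀ p : ℕ × ℕ,
      (q : ℂ) ^ (-s * ((p.1 : ℂ) + (p.2 : ℂ))) *
          ∑ ℓ ∈ Finset.Icc (-(p.1 : ℤ)) (p.2 : ℤ), μ ^ ℓ =
        F p.1 * t ^ p.2 + t ^ p.1 * G p.2 - t ^ p.1 * t ^ p.2 := by
    rintro ⟨m, n⟩
    have hexp : -s * ((m : ℂ) + (n : ℂ)) = ((m + n : ℕ) : ℂ) * (-s) := by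
      push_cast; ring
    have hcpow : (q : ℂ) ^ (-s * ((m : ℂ) + (n : ℂ))) = t ^ m * t ^ n := by
      rw [hexp, Complex.cpow_nat_mul, htdef, pow_add]
    simp only
    rw [hcpow, aux_inner μ hμ0 m n, hFdef, hGdef]
    ring
  -- value identification
  have h1t : (1 : ℂ) - t ≠ 0 := by
    intro h
    have : t = 1 := by linear_combination -h
    rw [this] at ht; simp at ht
  have h1u : (1 : ℂ) - μ⁻¹ * t ≠ 0 := by
    intro h
    have : μ⁻¹ * t = 1 := by linear_combination -h
    rw [this] at hu; simp at hu
  have h1v : (1 : ℂ) - μ * t ≠ 0 := by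
    intro h
    have : μ * t = 1 := by linear_combination -h
    rw [this] at hv; simp at hv
  have hval : (1 - μ⁻¹ * t)⁻¹ * (1 - t)⁻¹ * (1 - t)⁻¹ +
        (1 - t)⁻¹ * ((1 - μ * t)⁻¹ * (1 - t)⁻¹) - (1 - t)⁻¹ * (1 - t)⁻¹ =
      (1 + t) / ((1 - t) * (1 - μ * t) * (1 - μ⁻¹ * t)) := by
    have ha : (1 - t) * (1 - t)⁻¹ = 1 := mul_inv_cancel₀ h1t
    have hb : (1 - μ * t) * (1 - μ * t)⁻¹ = 1 := mul_inv_cancel₀ h1v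
    have hc : (1 - μ⁻¹ * t) * (1 - μ⁻¹ * t)⁻¹ = 1 := mul_inv_cancel₀ h1u
    have hμi : μ * μ⁻¹ = 1 := mul_inv_cancel₀ hμ0
    have e1 : (1 - μ * t) + (1 - μ⁻¹ * t) - (1 - μ * t) * (1 - μ⁻¹ * t)
        = (1 - t) * (1 + t) := by
      linear_combination (-(t ^ 2)) * hμi
    have e2 : (1 - μ * t)⁻¹ + (1 - μ⁻¹ * t)⁻¹ - 1
        = (1 - t) * (1 + t) * ((1 - μ * t)⁻¹ * (1 - μ⁻¹ * t)⁻¹) := by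
      linear_combination (1 - μ * t)⁻¹ * (1 - μ⁻¹ * t)⁻¹ * e1 +
        ((1 - μ⁻¹ * t) * (1 - μ⁻¹ * t)⁻¹ - (1 - μ⁻¹ * t)⁻¹) * hb +
        (1 - (1 - μ * t)⁻¹) * hc
    rw [div_eq_mul_inv, mul_inv, mul_inv]
    linear_combination ((1 - t)⁻¹ * (1 - t)⁻¹) * e2 +
      ((1 + t) * (1 - μ * t)⁻¹ * (1 - μ⁻¹ * t)⁻¹ * (1 - t)⁻¹) * ha
  rw [show (fun p : ℕ × ℕ =>
      (q : ℂ) ^ (-s * ((p.1 : ℂ) + (p.2 : ℂ))) *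
        ∑ ℓ ∈ Finset.Icc (-(p.1 : ℤ)) (p.2 : ℤ), μ ^ ℓ) =
      (fun p : ℕ × ℕ => F p.1 * t ^ p.2 + t ^ p.1 * G p.2 - t ^ p.1 * t ^ p.2)
    from funext hfun, ← hval]
  exact htotal
end

section
/- Let F be a p-adic field with p ≠ 2, E/F an unramified quadratic field extension with ring of integers O_E and uniformizer ϖ (which can be taken in F), and ε ∈ O_E an element with ε² ∈ O_F^× and trace Tr_{E/F}(ε) = 0 (so O_E = O_F + O_F ε). For every integer i ≥ 0, an element x of the norm-one group E¹ = {x ∈ E^× : N_{E/F}(x) = 1} satisfies x ∈ 1 + ϖⁱ O_E if and only if x ∈ 1 + ϖⁱ ε O_i, where O_i = O_F + ϖⁱ O_E. -/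
/-- Lemma `order-epsilon`: for `E/F` unramified quadratic with `p ≠ 2`,
`O_E = O_F + O_F ε` with `ε̄ = -ε`, `ε² ∈ O_F^×`, and `x` in the norm-one group,
`x ∈ 1 + ϖⁱ O_E` iff `x ∈ 1 + ϖⁱ ε O_i` where `O_i = O_F + ϖⁱ O_E`. -/
theorem stmt_5 {A B : Type*} [CommRing A] [IsDomain A] [IsDiscreteValuationRing A]
    [CommRing B] [IsDomain B] [IsDiscreteValuationRing B] [Algebra A B]
    (hinj : Function.Injective (algebraMap A B))
    (h2 : IsUnit (2 : A))
    (σ : B ≃ₐ[A] B) (hσinv : ∀ x : B, σ (σ x) = x)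
    (ϖ : A) (hϖ : Irreducible ϖ) (hϖB : Irreducible (algebraMap A B ϖ))
    (ε : B) (hσε : σ ε = -ε)
    (hε2 : ∃ u : Aˣ, ε * ε = algebraMap A B (u : A))
    (hgen : ∀ x : B, ∃ a b : A, x = algebraMap A B a + algebraMap A B b * ε)
    (i : ℕ) (x : B) (hx : x * σ x = 1) :
    (∃ y : B, x = 1 + algebraMap A B ϖ ^ i * y)
      ↔ (∃ a : A, ∃ b : B,
          x = 1 + algebraMap A B ϖ ^ i * ε *
            (algebraMap A B a + algebraMap A B ϖ ^ i * b)) := by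
  set f := algebraMap A B with hf
  constructor
  · rintro ⟨y, rfl⟩
    obtain ⟨a, b, rfl⟩ := hgen y
    obtain ⟨u, hu⟩ := hε2
    have hσx : σ (1 + f ϖ ^ i * (f a + f b * ε))
        = 1 + f ϖ ^ i * (f a - f b * ε) := by
      simp only [map_add, map_mul, map_pow, map_one, AlgEquiv.commutes, hσε, hf]
      ring
    rw [hσx] at hx
    have h2' : ((h2.unit⁻¹ : Aˣ) : A) * 2 = 1 := by
      have := h2.unit.inv_mul
      rwa [h2.unit_spec] at this
    have expand : (1 + f ϖ ^ i * (f a + f b * ε)) * (1 + f ϖ ^ i * (f a - f b * ε))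
        = 1 + f ϖ ^ i * f (2 * a + ϖ ^ i * (a * a - b * b * (u : A))) := by
      simp only [map_add, map_sub, map_mul, map_pow, map_ofNat]
      linear_combination (- (f ϖ ^ i) ^ 2 * f b * f b) * hu
    rw [expand] at hx
    have key : f (2 * a + ϖ ^ i * (a * a - b * b * (u : A))) = 0 := by
      have hP : f ϖ ^ i ≠ 0 := pow_ne_zero _ hϖB.ne_zero
      have := hx
      have h0 : f ϖ ^ i * f (2 * a + ϖ ^ i * (a * a - b * b * (u : A))) = 0 := by
        linear_combination this
      exact (mul_eq_zero.mp h0).resolve_left hP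
    have hA : 2 * a + ϖ ^ i * (a * a - b * b * (u : A)) = 0 :=
      hinj (by rw [key, map_zero])
    set c : A := -(((h2.unit⁻¹ : Aˣ) : A)) * (a * a - b * b * (u : A)) with hc
    have ha : a = ϖ ^ i * c := by
      rw [hc]
      linear_combination ((h2.unit⁻¹ : Aˣ) : A) * hA - a * h2'
    have hu' : f (u : A) * f ((u⁻¹ : Aˣ) : A) = 1 := by
      rw [← map_mul, Units.mul_inv, map_one]
    refine ⟨b, f c * ε * f ((u⁻¹ : Aˣ) : A), ?_⟩
    rw [ha]
    simp only [map_mul, map_pow]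
    linear_combination (- (f ϖ ^ i) ^ 2 * f c * f ((u⁻¹ : Aˣ) : A)) * hu
      - ((f ϖ ^ i) ^ 2 * f c) * hu'
  · rintro ⟨a, b, rfl⟩
    exact ⟨ε * (f a + f ϖ ^ i * b), by ring⟩
end
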